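/- For the DNLS flow with periodic boundary conditions, the quantity J(q) = Σ_{n=0}^{N−1} \overline{q_n}(q_{n+1} + q_{n−1}) takes real values along solutions and is a constant of motion: d/dt J(q(t)) = 0 along any solution of the DNLS. -/

import Mathlib

open Finset

private lemma zmod_sum_shift {N : ℕ} [NeZero N] (f : ZMod N → ℂ) :
    ∑ n : ZMod N, f (n + 1) = ∑ n : ZMod N, f n :=
  Fintype.sum_equiv (Equiv.addRight 1) _ _ (fun _ => rfl)

private lemma zmod_sum_shift' {N : ℕ} [NeZero N] (f : ZMod N → ℂ) :
    ∑ n : ZMod N, f (n - 1) = ∑ n : ZMod N, f n :=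
  Fintype.sum_equiv (Equiv.subRight 1) _ _ (fun _ => rfl)

private lemma conjJ {N : ℕ} [NeZero N] (Q : ZMod N → ℂ) :
    (starRingEnd ℂ) (∑ n : ZMod N, (starRingEnd ℂ) (Q n) * (Q (n+1) + Q (n-1)))
      = ∑ n : ZMod N, (starRingEnd ℂ) (Q n) * (Q (n+1) + Q (n-1)) := by
  rw [map_sum]
  have h1 : ∑ n : ZMod N, Q n * (starRingEnd ℂ) (Q (n+1))
      = ∑ n : ZMod N, Q (n-1) * (starRingEnd ℂ) (Q n) := by
    rw [← zmod_sum_shift (fun m => Q (m-1) * (starRingEnd ℂ) (Q m))]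
    simp [add_sub_cancel_right]
  have h2 : ∑ n : ZMod N, Q n * (starRingEnd ℂ) (Q (n-1))
      = ∑ n : ZMod N, Q (n+1) * (starRingEnd ℂ) (Q n) := by
    rw [← zmod_sum_shift' (fun m => Q (m+1) * (starRingEnd ℂ) (Q m))]
    simp [sub_add_cancel]
  calc ∑ n : ZMod N, (starRingEnd ℂ) ((starRingEnd ℂ) (Q n) * (Q (n+1) + Q (n-1)))
      = (∑ n : ZMod N, Q n * (starRingEnd ℂ) (Q (n+1)))
        + ∑ n : ZMod N, Q n * (starRingEnd ℂ) (Q (n-1)) := by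
        rw [← Finset.sum_add_distrib]
        refine Finset.sum_congr rfl fun n _ => by simp [map_mul, map_add, mul_add]
    _ = ∑ n : ZMod N, (starRingEnd ℂ) (Q n) * (Q (n+1) + Q (n-1)) := by
        rw [h1, h2, ← Finset.sum_add_distrib]
        refine Finset.sum_congr rfl fun n _ => by ring

private lemma term_lemma (ω h : ℝ) (x y z : ℂ) :
    (starRingEnd ℂ) (-Complex.I * ((1 / (h : ℂ)^2) * (x - 2*z + y)
        + ((‖z‖ : ℂ))^2 * (x + y) - 2*(ω : ℂ)^2*z)) * (x + y)
      + (starRingEnd ℂ) (y) * (-Complex.I * ((1 / (h : ℂ)^2) * (x - 2*z + y)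
        + ((‖z‖ : ℂ))^2 * (x + y) - 2*(ω : ℂ)^2*z))
      + (starRingEnd ℂ) (x) * (-Complex.I * ((1 / (h : ℂ)^2) * (x - 2*z + y)
        + ((‖z‖ : ℂ))^2 * (x + y) - 2*(ω : ℂ)^2*z))
    = Complex.I * (2 / (h : ℂ)^2 + 2*(ω : ℂ)^2)
        * (((starRingEnd ℂ) x + (starRingEnd ℂ) y) * z - (starRingEnd ℂ) z * (x + y)) := by
  simp only [map_mul, map_add, map_sub, map_neg, map_pow, map_div₀, map_one, map_ofNat,
    Complex.conj_ofReal, Complex.conj_I]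
  ring

/-- `J(q) = Σ conj(q_n)(q_{n+1} + q_{n−1})` is real valued and a constant of motion
along solutions of the DNLS with periodic boundary conditions. -/
theorem dnls_J_real_constant_of_motion (N : ℕ) [NeZero N] (ω h : ℝ)
    (hh : h = 1 / (N : ℝ)) (q : ZMod N → ℝ → ℂ)
    (hq : ∀ (n : ZMod N) (t : ℝ), HasDerivAt (q n)
      (-Complex.I * ((1 / (h : ℂ)^2) * (q (n+1) t - 2 * q n t + q (n-1) t)
        + ((‖q n t‖ : ℂ))^2 * (q (n+1) t + q (n-1) t)
        - 2 * (ω : ℂ)^2 * q n t)) t) :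
    ∀ t : ℝ,
      (∑ n : ZMod N, (starRingEnd ℂ) (q n t) * (q (n+1) t + q (n-1) t)).im = 0 ∧
      HasDerivAt
        (fun s => ∑ n : ZMod N, (starRingEnd ℂ) (q n s) * (q (n+1) s + q (n-1) s))
        0 t := by
  intro t
  -- abbreviations at time t
  set Q : ZMod N → ℂ := fun n => q n t with hQ
  set d : ZMod N → ℂ := fun n =>
    -Complex.I * ((1 / (h : ℂ)^2) * (Q (n+1) - 2 * Q n + Q (n-1))
      + ((‖Q n‖ : ℂ))^2 * (Q (n+1) + Q (n-1))
      - 2 * (ω : ℂ)^2 * Q n) with hd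
  have hreal : (starRingEnd ℂ) (∑ n : ZMod N, (starRingEnd ℂ) (Q n) * (Q (n+1) + Q (n-1)))
      = ∑ n : ZMod N, (starRingEnd ℂ) (Q n) * (Q (n+1) + Q (n-1)) := conjJ Q
  have him : (∑ n : ZMod N, (starRingEnd ℂ) (Q n) * (Q (n+1) + Q (n-1))).im = 0 :=
    Complex.conj_eq_iff_im.mp hreal
  refine ⟨him, ?_⟩
  -- derivative of each summand
  have hterm : ∀ n : ZMod N, HasDerivAt
      (fun s => (starRingEnd ℂ) (q n s) * (q (n+1) s + q (n-1) s))
      ((starRingEnd ℂ) (d n) * (Q (n+1) + Q (n-1)) + (starRingEnd ℂ) (Q n) * (d (n+1) + d (n-1)))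
      t := by
    intro n
    exact ((hq n t).star).mul ((hq (n+1) t).add (hq (n-1) t))
  have hsum : HasDerivAt
      (fun s => ∑ n : ZMod N, (starRingEnd ℂ) (q n s) * (q (n+1) s + q (n-1) s))
      (∑ n : ZMod N, ((starRingEnd ℂ) (d n) * (Q (n+1) + Q (n-1))
        + (starRingEnd ℂ) (Q n) * (d (n+1) + d (n-1)))) t :=
    HasDerivAt.fun_sum (fun n _ => hterm n)
  have hshift1 : ∑ n : ZMod N, (starRingEnd ℂ) (Q n) * d (n+1)
      = ∑ n : ZMod N, (starRingEnd ℂ) (Q (n-1)) * d n := by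
    rw [← zmod_sum_shift (fun m => (starRingEnd ℂ) (Q (m-1)) * d m)]
    simp [add_sub_cancel_right]
  have hshift2 : ∑ n : ZMod N, (starRingEnd ℂ) (Q n) * d (n-1)
      = ∑ n : ZMod N, (starRingEnd ℂ) (Q (n+1)) * d n := by
    rw [← zmod_sum_shift' (fun m => (starRingEnd ℂ) (Q (m+1)) * d m)]
    simp [sub_add_cancel]
  have hconjsum : ∑ n : ZMod N, ((starRingEnd ℂ) (Q (n+1)) + (starRingEnd ℂ) (Q (n-1))) * Q n
      = (starRingEnd ℂ) (∑ n : ZMod N, (starRingEnd ℂ) (Q n) * (Q (n+1) + Q (n-1))) := by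
    rw [map_sum]
    refine Finset.sum_congr rfl fun n _ => by
      simp only [map_mul, map_add, Complex.conj_conj]; ring
  have hD : (∑ n : ZMod N, ((starRingEnd ℂ) (d n) * (Q (n+1) + Q (n-1))
      + (starRingEnd ℂ) (Q n) * (d (n+1) + d (n-1)))) = 0 := by
    have step1 : (∑ n : ZMod N, ((starRingEnd ℂ) (d n) * (Q (n+1) + Q (n-1))
        + (starRingEnd ℂ) (Q n) * (d (n+1) + d (n-1))))
        = ∑ n : ZMod N, ((starRingEnd ℂ) (d n) * (Q (n+1) + Q (n-1))
          + (starRingEnd ℂ) (Q (n-1)) * d n + (starRingEnd ℂ) (Q (n+1)) * d n) := by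
      simp only [mul_add, Finset.sum_add_distrib, hshift1, hshift2]
      ring
    rw [step1]
    have step2 : ∀ n : ZMod N, (starRingEnd ℂ) (d n) * (Q (n+1) + Q (n-1))
        + (starRingEnd ℂ) (Q (n-1)) * d n + (starRingEnd ℂ) (Q (n+1)) * d n
        = Complex.I * (2 / (h : ℂ)^2 + 2*(ω : ℂ)^2)
          * (((starRingEnd ℂ) (Q (n+1)) + (starRingEnd ℂ) (Q (n-1))) * Q n
            - (starRingEnd ℂ) (Q n) * (Q (n+1) + Q (n-1))) := by
      intro n
      rw [hd]
      exact term_lemma ω h (Q (n+1)) (Q (n-1)) (Q n)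
    calc ∑ n : ZMod N, ((starRingEnd ℂ) (d n) * (Q (n+1) + Q (n-1))
          + (starRingEnd ℂ) (Q (n-1)) * d n + (starRingEnd ℂ) (Q (n+1)) * d n)
        = Complex.I * (2 / (h : ℂ)^2 + 2*(ω : ℂ)^2)
          * ((∑ n : ZMod N, ((starRingEnd ℂ) (Q (n+1)) + (starRingEnd ℂ) (Q (n-1))) * Q n)
            - ∑ n : ZMod N, (starRingEnd ℂ) (Q n) * (Q (n+1) + Q (n-1))) := by
          rw [Finset.sum_congr rfl fun n _ => step2 n, ← Finset.sum_sub_distrib,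
            Finset.mul_sum]
      _ = 0 := by rw [hconjsum, hreal, sub_self, mul_zero]
  rw [hD] at hsum
  exact hsum
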